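/- Let $\mathcal T^*$ be a rooted tree with uniform degree $d \geq 2$ and depth $L$, whose $p = d^L$ leaves are the network nodes, and let $\mathcal H^*$ be the hierarchical collection of clusters given by the leaf sets of all subtrees of $\mathcal T^*$ (equivalently, for each vertex of $\mathcal T^*$, the set of leaves below it). Suppose the similarity between leaves $i \neq j$ is $r_{ij} = C \cdot \prod_{\ell = \ell'(i,j)+1}^{L} (\tanh \gamma_\ell)^2$, where $C > 0$, each $\gamma_\ell \in (0,\infty)$, and $\ell'(i,j)$ denotes the level of the root of the smallest subtree of $\mathcal T^*$ containing both $i$ and $j$. Then $\{r_{ij}\}$ satisfies the strict separation condition (for every nested pair $c' \subset c$ in $\mathcal H^*$, the maximum similarity between $i \in c'$ and $j \in c\setminus c'$ is smaller than the minimum similarity within $c'$), and consequently the average-linkage agglomerative clustering algorithm applied to $\{r_{ij}\}$ outputs a hierarchy containing $\mathcal H^*$, i.e., it recovers the tree-structured dependency graph $\mathcal T^*$. -/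

import Mathlib

variable {ι : Type*} [Fintype ι] [DecidableEq ι]

/-- Average similarity between two clusters. -/
noncomputable def avgSim (r : ι → ι → ℝ) (c₁ c₂ : Finset ι) : ℝ :=
  (∑ i ∈ c₁, ∑ j ∈ c₂, r i j) / ((c₁.card : ℝ) * c₂.card)

/-- One step of average-linkage agglomerative clustering. -/
def AggloStep (r : ι → ι → ℝ) (C C' : Finset (Finset ι)) : Prop :=
  ∃ c₁ ∈ C, ∃ c₂ ∈ C, c₁ ≠ c₂ ∧
    (∀ c₁' ∈ C, ∀ c₂' ∈ C, c₁' ≠ c₂' → avgSim r c₁' c₂' ≤ avgSim r c₁ c₂) ∧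
    C' = (C \ {c₁, c₂}) ∪ {c₁ ∪ c₂}

/-- `H` is a possible output hierarchy of average-linkage agglomerative clustering on `r`. -/
def IsAggloHierarchy (r : ι → ι → ℝ) (H : Set (Finset ι)) : Prop :=
  ∃ states : List (Finset (Finset ι)),
    states.head? = some (Finset.univ.image fun i => ({i} : Finset ι)) ∧
    states.getLast? = some {Finset.univ} ∧
    states.Chain' (AggloStep r) ∧
    H = {c | ∃ C ∈ states, c ∈ C}

/-- The strict separation condition of Lemma 1 for the collection `Hs`. -/
def SeparationCondition (r : ι → ι → ℝ) (Hs : Set (Finset ι)) : Prop :=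
  ∀ c ∈ Hs, ∀ c' ∈ Hs, c' ⊂ c →
    ∀ i ∈ c', ∀ j ∈ c \ c', ∀ k ∈ c', ∀ l ∈ c', k ≠ l → r i j < r k l

/-- The leaves of the `d`-ary tree of depth `L` below the level-`ℓ` vertex indexed by the
prefix `s`: all leaves (strings of length `L`) extending `s`. -/
def leafCluster (d L : ℕ) (ℓ : ℕ) (hℓ : ℓ ≤ L) (s : Fin ℓ → Fin d) :
    Finset (Fin L → Fin d) :=
  Finset.univ.filter fun x => ∀ k : Fin ℓ, x (Fin.castLE hℓ k) = s k

/-- The hierarchical collection of clusters given by the leaf sets of all subtrees of the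
complete `d`-ary tree of depth `L`. -/
def treeHierarchy (d L : ℕ) : Set (Finset (Fin L → Fin d)) :=
  {c | ∃ (ℓ : ℕ) (hℓ : ℓ ≤ L) (s : Fin ℓ → Fin d), c = leafCluster d L ℓ hℓ s}

/-- The level of the root of the smallest subtree containing the two leaves `i` and `j`:
the length of their longest common prefix. -/
def lcpLevel (d L : ℕ) (i j : Fin L → Fin d) : ℕ :=
  ((Finset.range (L + 1)).filter fun m => ∀ k : Fin L, (k : ℕ) < m → i k = j k).max'
    ⟨0, by simp⟩

/-- Auxiliary: entrywise strict domination implies strict inequality of average similarities. -/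
lemma avgSim_lt_avgSim (r : ι → ι → ℝ) {c₁ c₂ c₃ c₄ : Finset ι}
    (h₁ : c₁.Nonempty) (h₂ : c₂.Nonempty) (h₃ : c₃.Nonempty) (h₄ : c₄.Nonempty)
    (h : ∀ i ∈ c₁, ∀ j ∈ c₂, ∀ k ∈ c₃, ∀ l ∈ c₄, r i j < r k l) :
    avgSim r c₁ c₂ < avgSim r c₃ c₄ := by
  obtain ⟨k₀, hk₀⟩ := h₃
  obtain ⟨l₀, hl₀⟩ := h₄
  have hne : ((c₃ ×ˢ c₄).image fun p => r p.1 p.2).Nonempty :=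
    ⟨r k₀ l₀, Finset.mem_image.2 ⟨(k₀, l₀), Finset.mk_mem_product hk₀ hl₀, rfl⟩⟩
  set m := ((c₃ ×ˢ c₄).image fun p => r p.1 p.2).min' hne with hm
  obtain ⟨⟨k₁, l₁⟩, hkl, hmeq⟩ := Finset.mem_image.1 (Finset.min'_mem _ hne)
  have hlt : ∀ i ∈ c₁, ∀ j ∈ c₂, r i j < m := fun i hi j hj => by
    rw [hm, ← hmeq]
    exact h i hi j hj k₁ (Finset.mem_product.1 hkl).1 l₁ (Finset.mem_product.1 hkl).2
  have hge : ∀ k ∈ c₃, ∀ l ∈ c₄, m ≤ r k l := fun k hk l hl =>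
    Finset.min'_le _ _ (Finset.mem_image.2 ⟨(k, l), Finset.mk_mem_product hk hl, rfl⟩)
  have hc₁ : (0 : ℝ) < c₁.card := by exact_mod_cast Finset.card_pos.2 h₁
  have hc₂ : (0 : ℝ) < c₂.card := by exact_mod_cast Finset.card_pos.2 h₂
  have hc₃ : (0 : ℝ) < c₃.card := by exact_mod_cast Finset.card_pos.2 ⟨k₀, hk₀⟩
  have hc₄ : (0 : ℝ) < c₄.card := by exact_mod_cast Finset.card_pos.2 ⟨l₀, hl₀⟩
  have hs₁ : ∑ i ∈ c₁, ∑ j ∈ c₂, r i j < (c₁.card : ℝ) * c₂.card * m := by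
    calc ∑ i ∈ c₁, ∑ j ∈ c₂, r i j < ∑ _i ∈ c₁, (c₂.card : ℝ) * m := by
          refine Finset.sum_lt_sum_of_nonempty h₁ fun i hi => ?_
          calc ∑ j ∈ c₂, r i j < ∑ _j ∈ c₂, m :=
                Finset.sum_lt_sum_of_nonempty h₂ fun j hj => hlt i hi j hj
            _ = (c₂.card : ℝ) * m := by rw [Finset.sum_const, nsmul_eq_mul]
      _ = (c₁.card : ℝ) * c₂.card * m := by rw [Finset.sum_const, nsmul_eq_mul]; ring
  have hs₂ : (c₃.card : ℝ) * c₄.card * m ≤ ∑ k ∈ c₃, ∑ l ∈ c₄, r k l := by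
    calc (c₃.card : ℝ) * c₄.card * m = ∑ _k ∈ c₃, (c₄.card : ℝ) * m := by
          rw [Finset.sum_const, nsmul_eq_mul]; ring
      _ ≤ ∑ k ∈ c₃, ∑ l ∈ c₄, r k l := by
          refine Finset.sum_le_sum fun k hk => ?_
          calc (c₄.card : ℝ) * m = ∑ _l ∈ c₄, m := by rw [Finset.sum_const, nsmul_eq_mul]
            _ ≤ ∑ l ∈ c₄, r k l := Finset.sum_le_sum fun l hl => hge k hk l hl
  have ha : avgSim r c₁ c₂ < m := by
    rw [avgSim, div_lt_iff₀ (by positivity)]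
    linarith
  have hb : m ≤ avgSim r c₃ c₄ := by
    rw [avgSim, le_div_iff₀ (by positivity)]
    linarith
  linarith

/-- Auxiliary: a state of the algorithm is a partition into nonempty clusters. -/
def IsPartitionState (Cs : Finset (Finset ι)) : Prop :=
  (∀ c ∈ Cs, c.Nonempty) ∧ (∀ c ∈ Cs, ∀ c' ∈ Cs, c ≠ c' → Disjoint c c') ∧
    ∀ x : ι, ∃ c ∈ Cs, x ∈ c

/-- Auxiliary invariant relative to a target cluster `cstar`. -/
def ClusterInv (cstar : Finset ι) (Cs : Finset (Finset ι)) : Prop :=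
  IsPartitionState Cs ∧ ∀ c ∈ Cs, c ⊆ cstar ∨ cstar ⊆ c ∨ Disjoint c cstar

theorem avgSim_aux_test : True := trivial

lemma aggloStep_inv {r : ι → ι → ℝ} (hsymm : ∀ i j : ι, i ≠ j → r i j = r j i)
    {Hs : Set (Finset ι)} (hsep : SeparationCondition r Hs)
    (huniv : Finset.univ ∈ Hs) {cstar : Finset ι} (hcsH : cstar ∈ Hs)
    (hcne : cstar.Nonempty) {Cs Cs' : Finset (Finset ι)}
    (hInv : ClusterInv cstar Cs) (hstep : AggloStep r Cs Cs') : ClusterInv cstar Cs' := by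
  obtain ⟨⟨hne, hdisj, hcover⟩, htri⟩ := hInv
  obtain ⟨c₁, hc₁, c₂, hc₂, h12, hmax, hC'⟩ := hstep
  have hmem : ∀ c, c ∈ Cs' ↔ (c ∈ Cs ∧ c ≠ c₁ ∧ c ≠ c₂) ∨ c = c₁ ∪ c₂ := by
    intro c
    subst hC'
    simp only [Finset.mem_union, Finset.mem_sdiff, Finset.mem_insert, Finset.mem_singleton]
    tauto
  -- separation specialized to cstar inside univ
  have hsep' : cstar ≠ Finset.univ → ∀ i ∈ cstar, ∀ j, j ∉ cstar →
      ∀ k ∈ cstar, ∀ l ∈ cstar, k ≠ l → r i j < r k l := by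
    intro hneu i hi j hj k hk l hl hkl
    exact hsep _ huniv _ hcsH ⟨Finset.subset_univ _, fun h => hneu (subset_antisymm (Finset.subset_univ _) h)⟩
      i hi j (Finset.mem_sdiff.2 ⟨Finset.mem_univ j, hj⟩) k hk l hl hkl
  -- find a third cluster inside cstar when csub is a proper subcluster
  have find3 : ∀ csub ∈ Cs, csub ⊆ cstar → csub ≠ cstar →
      ∃ c₃ ∈ Cs, c₃ ⊆ cstar ∧ c₃ ≠ csub ∧ c₃.Nonempty := by
    intro csub hsubC hsub hne'
    obtain ⟨x, hxs, hxn⟩ := Finset.exists_of_ssubset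
      (ssubset_of_subset_of_ne hsub hne')
    obtain ⟨c₃, h3C, hx3⟩ := hcover x
    have h3ne : c₃ ≠ csub := fun h => hxn (h ▸ hx3)
    refine ⟨c₃, h3C, ?_, h3ne, ⟨x, hx3⟩⟩
    rcases htri c₃ h3C with h | h | h
    · exact h
    · obtain ⟨y, hy⟩ := hne csub hsubC
      exact absurd (Finset.disjoint_left.1 (hdisj c₃ h3C csub hsubC h3ne) (h (hsub hy))) (by simp [hy])
    · exact absurd (Finset.disjoint_left.1 h hx3 hxs) (by simp)
  -- the two impossible bad merges
  have badA : c₁ ⊆ cstar → c₁ ≠ cstar → Disjoint c₂ cstar → False := by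
    intro hsub hneq hdis
    obtain ⟨c₃, h3C, h3sub, h3ne1, h3nonempty⟩ := find3 c₁ hc₁ hsub hneq
    have h1ne : c₁.Nonempty := hne c₁ hc₁
    have h2ne : c₂.Nonempty := hne c₂ hc₂
    have hneu : cstar ≠ Finset.univ := by
      obtain ⟨z, hz⟩ := h2ne
      intro h
      exact Finset.disjoint_left.1 hdis hz (h ▸ Finset.mem_univ z)
    have hd13 : Disjoint c₁ c₃ := hdisj c₁ hc₁ c₃ h3C (fun h => h3ne1 h.symm)
    have hlt : avgSim r c₁ c₂ < avgSim r c₁ c₃ := by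
      refine avgSim_lt_avgSim r h1ne h2ne h1ne h3nonempty ?_
      intro i hi j hj k hk l hl
      exact hsep' hneu i (hsub hi) j (Finset.disjoint_left.1 hdis hj)
        k (hsub hk) l (h3sub hl) (fun h => Finset.disjoint_left.1 hd13 hk (h ▸ hl))
    exact absurd (hmax c₁ hc₁ c₃ h3C (fun h => h3ne1 h.symm)) (not_le.2 hlt)
  have badB : Disjoint c₁ cstar → c₂ ⊆ cstar → c₂ ≠ cstar → False := by
    intro hdis hsub hneq
    obtain ⟨c₃, h3C, h3sub, h3ne2, h3nonempty⟩ := find3 c₂ hc₂ hsub hneq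
    have h1ne : c₁.Nonempty := hne c₁ hc₁
    have h2ne : c₂.Nonempty := hne c₂ hc₂
    have hneu : cstar ≠ Finset.univ := by
      obtain ⟨z, hz⟩ := h1ne
      intro h
      exact Finset.disjoint_left.1 hdis hz (h ▸ Finset.mem_univ z)
    have hd32 : Disjoint c₃ c₂ := hdisj c₃ h3C c₂ hc₂ h3ne2
    have hlt : avgSim r c₁ c₂ < avgSim r c₃ c₂ := by
      refine avgSim_lt_avgSim r h1ne h2ne h3nonempty h2ne ?_
      intro i hi j hj k hk l hl
      have hij : i ≠ j := fun h => Finset.disjoint_left.1 hdis hi (h ▸ hsub hj)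
      rw [hsymm i j hij]
      exact hsep' hneu j (hsub hj) i (Finset.disjoint_left.1 hdis hi)
        k (h3sub hk) l (hsub hl) (fun h => Finset.disjoint_left.1 hd32 hk (h ▸ hl))
    exact absurd (hmax c₃ h3C c₂ hc₂ h3ne2) (not_le.2 hlt)
  constructor
  · refine ⟨?_, ?_, ?_⟩
    · intro c hc
      rcases (hmem c).1 hc with ⟨hcC, -, -⟩ | rfl
      · exact hne c hcC
      · exact (hne c₁ hc₁).mono Finset.subset_union_left
    · intro c hc c' hc' hcc'
      rcases (hmem c).1 hc with ⟨hcC, hn1, hn2⟩ | rfl <;>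
        rcases (hmem c').1 hc' with ⟨hcC', hn1', hn2'⟩ | rfl
      · exact hdisj c hcC c' hcC' hcc'
      · exact Finset.disjoint_union_right.2 ⟨hdisj c hcC c₁ hc₁ hn1, hdisj c hcC c₂ hc₂ hn2⟩
      · exact (Finset.disjoint_union_left.2
          ⟨hdisj c₁ hc₁ c' hcC' (fun h => hn1' h.symm),
           hdisj c₂ hc₂ c' hcC' (fun h => hn2' h.symm)⟩)
      · exact absurd rfl hcc'
    · intro x
      obtain ⟨c, hcC, hxc⟩ := hcover x
      by_cases h1 : c = c₁
      · exact ⟨c₁ ∪ c₂, (hmem _).2 (Or.inr rfl), Finset.mem_union_left _ (h1 ▸ hxc)⟩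
      by_cases h2 : c = c₂
      · exact ⟨c₁ ∪ c₂, (hmem _).2 (Or.inr rfl), Finset.mem_union_right _ (h2 ▸ hxc)⟩
      · exact ⟨c, (hmem _).2 (Or.inl ⟨hcC, h1, h2⟩), hxc⟩
  · intro c hc
    rcases (hmem c).1 hc with ⟨hcC, -, -⟩ | rfl
    · exact htri c hcC
    rcases htri c₁ hc₁ with t₁ | t₁ | t₁ <;> rcases htri c₂ hc₂ with t₂ | t₂ | t₂
    · exact Or.inl (Finset.union_subset t₁ t₂)
    · exact Or.inr (Or.inl (t₂.trans Finset.subset_union_right))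
    · by_cases h1 : c₁ = cstar
      · exact Or.inr (Or.inl (h1 ▸ Finset.subset_union_left))
      · exact absurd (badA t₁ h1 t₂) (fun h => h)
    · exact Or.inr (Or.inl (t₁.trans Finset.subset_union_left))
    · exact Or.inr (Or.inl (t₁.trans Finset.subset_union_left))
    · exact Or.inr (Or.inl (t₁.trans Finset.subset_union_left))
    · by_cases h2 : c₂ = cstar
      · exact Or.inr (Or.inl (h2 ▸ Finset.subset_union_right))
      · exact absurd (badB t₁ t₂ h2) (fun h => h)
    · exact Or.inr (Or.inl (t₂.trans Finset.subset_union_right))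
    · exact Or.inr (Or.inr (Finset.disjoint_union_left.2 ⟨t₁, t₂⟩))

lemma chain_key {r : ι → ι → ℝ} (hsymm : ∀ i j : ι, i ≠ j → r i j = r j i)
    {Hs : Set (Finset ι)} (hsep : SeparationCondition r Hs)
    (huniv : Finset.univ ∈ Hs) {cstar : Finset ι} (hcsH : cstar ∈ Hs)
    (hcne : cstar.Nonempty) :
    ∀ states : List (Finset (Finset ι)), states.Chain' (AggloStep r) →
    ∀ C₀, states.head? = some C₀ → ClusterInv cstar C₀ →
    (∃ Cw ∈ states, ∃ c ∈ Cw, cstar ⊆ c) →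
    (∃ Cw ∈ states, cstar ∈ Cw) ∨ ∃ c ∈ C₀, cstar ⊆ c
  | [] => by simp
  | C₀' :: rest => by
    intro hchain C0 hhead hInv hwit
    obtain rfl : C0 = C₀' := by simpa using hhead.symm
    by_cases hex : ∃ c ∈ C0, cstar ⊆ c
    · exact Or.inr hex
    obtain ⟨Cw, hCw, cw, hcw, hsubw⟩ := hwit
    rcases List.mem_cons.1 hCw with rfl | hCw'
    · exact absurd ⟨cw, hcw, hsubw⟩ hex
    match rest, hCw' with
    | C₁ :: rest', hCw' =>
      have hstep : AggloStep r C0 C₁ := (List.isChain_cons_cons.1 hchain).1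
      have hchain' : (C₁ :: rest').Chain' (AggloStep r) := (List.isChain_cons_cons.1 hchain).2
      have hInv₁ : ClusterInv cstar C₁ := aggloStep_inv hsymm hsep huniv hcsH hcne hInv hstep
      have hwit' : ∃ Cw ∈ C₁ :: rest', ∃ c ∈ Cw, cstar ⊆ c := ⟨Cw, hCw', cw, hcw, hsubw⟩
      rcases chain_key hsymm hsep huniv hcsH hcne (C₁ :: rest') hchain' C₁ rfl hInv₁ hwit' with
        ⟨Cw'', h1, h2⟩ | ⟨c, hcC₁, hsubc⟩
      · exact Or.inl ⟨Cw'', List.mem_cons_of_mem _ h1, h2⟩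
      · -- c ∈ C₁ with cstar ⊆ c; c must be the new merged cluster and equal cstar
        obtain ⟨c₁, hc₁, c₂, hc₂, h12, hmax, hC'⟩ := hstep
        have hmem : c ∈ (C0 \ {c₁, c₂}) ∪ {c₁ ∪ c₂} := hC' ▸ hcC₁
        rcases Finset.mem_union.1 hmem with hc' | hc'
        · exact absurd ⟨c, (Finset.mem_sdiff.1 hc').1, hsubc⟩ hex
        obtain rfl : c = c₁ ∪ c₂ := Finset.mem_singleton.1 hc'
        obtain ⟨⟨hne, hdisj, hcover⟩, htri⟩ := hInv
        have nsup : ∀ cc ∈ C0, ¬ cstar ⊆ cc := fun cc hcc h => hex ⟨cc, hcc, h⟩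
        have t₁ : c₁ ⊆ cstar ∨ Disjoint c₁ cstar := by
          rcases htri c₁ hc₁ with h | h | h
          exacts [Or.inl h, absurd h (nsup c₁ hc₁), Or.inr h]
        have t₂ : c₂ ⊆ cstar ∨ Disjoint c₂ cstar := by
          rcases htri c₂ hc₂ with h | h | h
          exacts [Or.inl h, absurd h (nsup c₂ hc₂), Or.inr h]
        rcases t₁ with t₁ | t₁ <;> rcases t₂ with t₂ | t₂
        · have : cstar = c₁ ∪ c₂ := subset_antisymm hsubc (Finset.union_subset t₁ t₂)
          exact Or.inl ⟨C₁, List.mem_cons_of_mem _ List.mem_cons_self, this ▸ hcC₁⟩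
        · refine absurd (nsup c₁ hc₁ ?_) (fun h => h)
          intro x hx
          rcases Finset.mem_union.1 (hsubc hx) with h | h
          · exact h
          · exact absurd hx (Finset.disjoint_left.1 t₂ h)
        · refine absurd (nsup c₂ hc₂ ?_) (fun h => h)
          intro x hx
          rcases Finset.mem_union.1 (hsubc hx) with h | h
          · exact absurd hx (Finset.disjoint_left.1 t₁ h)
          · exact h
        · obtain ⟨x, hx⟩ := hcne
          rcases Finset.mem_union.1 (hsubc hx) with h | h
          · exact absurd hx (Finset.disjoint_left.1 t₁ h)
          · exact absurd hx (Finset.disjoint_left.1 t₂ h)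

lemma cluster_mem_of_hierarchy {r : ι → ι → ℝ} (hsymm : ∀ i j : ι, i ≠ j → r i j = r j i)
    {Hs : Set (Finset ι)} (hsep : SeparationCondition r Hs)
    (huniv : Finset.univ ∈ Hs) {cstar : Finset ι} (hcsH : cstar ∈ Hs)
    (hcne : cstar.Nonempty) {H : Set (Finset ι)} (hH : IsAggloHierarchy r H) : cstar ∈ H := by
  obtain ⟨states, hhead, hlast, hchain, hHdef⟩ := hH
  have hInv₀ : ClusterInv cstar (Finset.univ.image fun i => ({i} : Finset ι)) := by
    refine ⟨⟨?_, ?_, ?_⟩, ?_⟩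
    · intro c hc
      obtain ⟨i, -, rfl⟩ := Finset.mem_image.1 hc
      exact Finset.singleton_nonempty i
    · intro c hc c' hc' hcc'
      obtain ⟨i, -, rfl⟩ := Finset.mem_image.1 hc
      obtain ⟨j, -, rfl⟩ := Finset.mem_image.1 hc'
      simpa using fun h => hcc' (by rw [h])
    · intro x
      exact ⟨{x}, Finset.mem_image.2 ⟨x, Finset.mem_univ x, rfl⟩, Finset.mem_singleton_self x⟩
    · intro c hc
      obtain ⟨i, -, rfl⟩ := Finset.mem_image.1 hc
      by_cases h : i ∈ cstar
      · exact Or.inl (Finset.singleton_subset_iff.2 h)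
      · exact Or.inr (Or.inr (Finset.disjoint_singleton_left.2 h))
  have hwit : ∃ Cw ∈ states, ∃ c ∈ Cw, cstar ⊆ c :=
    ⟨{Finset.univ}, List.mem_of_mem_getLast? (by rw [hlast]; rfl),
      Finset.univ, Finset.mem_singleton_self _, Finset.subset_univ _⟩
  rcases chain_key hsymm hsep huniv hcsH hcne states hchain _ hhead hInv₀ hwit with
    ⟨Cw, hCw, hcs⟩ | ⟨c, hc, hsub⟩
  · rw [hHdef]; exact ⟨Cw, hCw, hcs⟩
  · obtain ⟨i, -, rfl⟩ := Finset.mem_image.1 hc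
    have : cstar = {i} := by
      rcases Finset.subset_singleton_iff.1 hsub with h | h
      · exact absurd h (Finset.nonempty_iff_ne_empty.1 hcne)
      · exact h
    rw [hHdef]
    exact ⟨_, List.mem_of_mem_head? (by rw [hhead]; rfl), this ▸ hc⟩

lemma lcpLevel_mem (d L : ℕ) (i j : Fin L → Fin d) :
    lcpLevel d L i j ∈ (Finset.range (L + 1)).filter
      fun m => ∀ k : Fin L, (k : ℕ) < m → i k = j k :=
  Finset.max'_mem _ _

lemma lcpLevel_le (d L : ℕ) (i j : Fin L → Fin d) : lcpLevel d L i j ≤ L := by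
  have := (Finset.mem_filter.1 (lcpLevel_mem d L i j)).1
  exact Nat.lt_succ_iff.1 (Finset.mem_range.1 this)

lemma lcpLevel_spec (d L : ℕ) (i j : Fin L → Fin d) :
    ∀ k : Fin L, (k : ℕ) < lcpLevel d L i j → i k = j k :=
  (Finset.mem_filter.1 (lcpLevel_mem d L i j)).2

lemma le_lcpLevel (d L : ℕ) (i j : Fin L → Fin d) (m : ℕ) (hm : m ≤ L)
    (h : ∀ k : Fin L, (k : ℕ) < m → i k = j k) : m ≤ lcpLevel d L i j :=
  Finset.le_max' _ m (Finset.mem_filter.2 ⟨Finset.mem_range.2 (Nat.lt_succ_of_le hm), h⟩)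

lemma lcpLevel_symm (d L : ℕ) (i j : Fin L → Fin d) :
    lcpLevel d L i j = lcpLevel d L j i := by
  unfold lcpLevel
  congr 1
  ext m
  simp only [Finset.mem_filter]
  constructor <;> rintro ⟨h1, h2⟩ <;> exact ⟨h1, fun k hk => (h2 k hk).symm⟩

lemma lcpLevel_lt_of_not_mem {d L ℓ : ℕ} {hℓ : ℓ ≤ L} {s : Fin ℓ → Fin d}
    {i j : Fin L → Fin d} (hi : i ∈ leafCluster d L ℓ hℓ s)
    (hj : j ∉ leafCluster d L ℓ hℓ s) : lcpLevel d L i j < ℓ := by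
  simp only [leafCluster, Finset.mem_filter, Finset.mem_univ, true_and] at hi hj
  push_neg at hj
  obtain ⟨k, hk⟩ := hj
  by_contra h
  push_neg at h
  have hlt : ((Fin.castLE hℓ k : Fin L) : ℕ) < lcpLevel d L i j :=
    lt_of_lt_of_le (by simpa using k.isLt) h
  exact hk ((lcpLevel_spec d L i j _ hlt).symm.trans (hi k))

lemma le_lcpLevel_of_mem {d L ℓ : ℕ} {hℓ : ℓ ≤ L} {s : Fin ℓ → Fin d}
    {i j : Fin L → Fin d} (hi : i ∈ leafCluster d L ℓ hℓ s)
    (hj : j ∈ leafCluster d L ℓ hℓ s) : ℓ ≤ lcpLevel d L i j := by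
  simp only [leafCluster, Finset.mem_filter, Finset.mem_univ, true_and] at hi hj
  refine le_lcpLevel d L i j ℓ hℓ fun k hk => ?_
  have hkey : k = Fin.castLE hℓ ⟨(k : ℕ), hk⟩ := by ext; rfl
  rw [hkey, hi ⟨(k : ℕ), hk⟩, hj ⟨(k : ℕ), hk⟩]

lemma prod_tanh_lt {L : ℕ} (γ : ℕ → ℝ) (hγ : ∀ ℓ, 0 < γ ℓ) {m₁ m₂ : ℕ}
    (h12 : m₁ < m₂) (h2L : m₂ ≤ L) :
    ∏ ℓ ∈ Finset.Icc (m₁ + 1) L, (Real.tanh (γ ℓ)) ^ 2 <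
      ∏ ℓ ∈ Finset.Icc (m₂ + 1) L, (Real.tanh (γ ℓ)) ^ 2 := by
  have htanh : ∀ ℓ, 0 < Real.tanh (γ ℓ) ∧ Real.tanh (γ ℓ) < 1 := by
    intro ℓ
    rw [Real.tanh_eq_sinh_div_cosh]
    exact ⟨div_pos (Real.sinh_pos_iff.2 (hγ ℓ)) (Real.cosh_pos _),
      (div_lt_one (Real.cosh_pos _)).2 (Real.sinh_lt_cosh _)⟩
  have hpos : ∀ S : Finset ℕ, (0:ℝ) < ∏ ℓ ∈ S, (Real.tanh (γ ℓ)) ^ 2 := by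
    intro S
    exact Finset.prod_pos fun ℓ _ => pow_pos (htanh ℓ).1 2
  have hIcc : ∀ m : ℕ, Finset.Icc (m + 1) L = Finset.Ioc m L := by
    intro m; rw [← Finset.Icc_add_one_left_eq_Ioc]
  rw [hIcc, hIcc]
  rw [← Finset.prod_Ioc_consecutive (fun ℓ => (Real.tanh (γ ℓ)) ^ 2) (le_of_lt h12) h2L]
  have h1 : ∏ ℓ ∈ Finset.Ioc m₁ m₂, (Real.tanh (γ ℓ)) ^ 2 < 1 := by
    have hne : m₂ ∈ Finset.Ioc m₁ m₂ := Finset.mem_Ioc.2 ⟨h12, le_refl _⟩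
    calc ∏ ℓ ∈ Finset.Ioc m₁ m₂, (Real.tanh (γ ℓ)) ^ 2
        ≤ (Real.tanh (γ m₂)) ^ 2 := by
          rw [← Finset.prod_erase_mul _ _ hne]
          nth_rewrite 2 [← one_mul ((Real.tanh (γ m₂)) ^ 2)]
          refine mul_le_mul_of_nonneg_right ?_ (le_of_lt (pow_pos (htanh m₂).1 2))
          refine Finset.prod_le_one (fun ℓ _ => le_of_lt (pow_pos (htanh ℓ).1 2))
            (fun ℓ _ => ?_)
          exact le_of_lt (pow_lt_one₀ (le_of_lt (htanh ℓ).1) (htanh ℓ).2 two_ne_zero)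
      _ < 1 := pow_lt_one₀ (le_of_lt (htanh m₂).1) (htanh m₂).2 two_ne_zero
  calc (∏ ℓ ∈ Finset.Ioc m₁ m₂, (Real.tanh (γ ℓ)) ^ 2) *
        ∏ ℓ ∈ Finset.Ioc m₂ L, (Real.tanh (γ ℓ)) ^ 2
      < 1 * ∏ ℓ ∈ Finset.Ioc m₂ L, (Real.tanh (γ ℓ)) ^ 2 :=
        mul_lt_mul_of_pos_right h1 (hpos _)
    _ = ∏ ℓ ∈ Finset.Ioc m₂ L, (Real.tanh (γ ℓ)) ^ 2 := one_mul _

/-- **Proposition 1.** If the similarity between distinct leaves `i ≠ j` of a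
complete `d`-ary tree of depth `L` is `r i j = C ∏_{ℓ=ℓ'(i,j)+1}^{L} (tanh γ_ℓ)²` with
`C > 0` and `γ_ℓ ∈ (0,∞)`, where `ℓ'(i,j)` is the level of the smallest subtree containing
`i` and `j`, then `r` satisfies the strict separation condition for the tree hierarchy, and
consequently average-linkage agglomerative clustering recovers the tree: every output
hierarchy contains all subtree leaf-clusters. -/
theorem tree_similarity_separation_and_recovery (d L : ℕ) (hd : 2 ≤ d)
    (C : ℝ) (hC : 0 < C) (γ : ℕ → ℝ) (hγ : ∀ ℓ, 0 < γ ℓ)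
    (r : (Fin L → Fin d) → (Fin L → Fin d) → ℝ)
    (hr : ∀ i j, i ≠ j →
      r i j = C * ∏ ℓ ∈ Finset.Icc (lcpLevel d L i j + 1) L, (Real.tanh (γ ℓ)) ^ 2) :
    SeparationCondition r (treeHierarchy d L) ∧
    ∀ H, IsAggloHierarchy r H → treeHierarchy d L ⊆ H := by
  have hsepmain : SeparationCondition r (treeHierarchy d L) := by
    rintro c ⟨ℓ, hℓ, s, rfl⟩ c' ⟨ℓ', hℓ', s', rfl⟩ hss i hi j hj k hk l hl hkl
    rw [Finset.mem_sdiff] at hj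
    have hij : i ≠ j := fun h => hj.2 (h ▸ hi)
    have m1 : lcpLevel d L i j < ℓ' := lcpLevel_lt_of_not_mem hi hj.2
    have m2 : ℓ' ≤ lcpLevel d L k l := le_lcpLevel_of_mem hk hl
    rw [hr i j hij, hr k l hkl]
    exact mul_lt_mul_of_pos_left
      (prod_tanh_lt γ hγ (lt_of_lt_of_le m1 m2) (lcpLevel_le d L k l)) hC
  refine ⟨hsepmain, ?_⟩
  intro H hH c hc
  have hsymm : ∀ i j : Fin L → Fin d, i ≠ j → r i j = r j i := by
    intro i j hij
    rw [hr i j hij, hr j i hij.symm, lcpLevel_symm]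
  have huniv : (Finset.univ : Finset (Fin L → Fin d)) ∈ treeHierarchy d L := by
    refine ⟨0, Nat.zero_le L, Fin.elim0, ?_⟩
    ext x
    simp only [leafCluster, Finset.mem_filter, Finset.mem_univ, true_and, true_iff]
    exact fun k => k.elim0
  have hnonempty : Finset.Nonempty c := by
    obtain ⟨ℓ, hℓ, s, rfl⟩ := hc
    refine ⟨fun k => if h : (k : ℕ) < ℓ then s ⟨(k : ℕ), h⟩ else ⟨0, by omega⟩, ?_⟩
    simp only [leafCluster, Finset.mem_filter, Finset.mem_univ, true_and]
    intro k
    have hk : ((Fin.castLE hℓ k : Fin L) : ℕ) < ℓ := by simpa using k.isLt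
    rw [dif_pos hk]
    exact congrArg s (Fin.ext rfl)
  exact cluster_mem_of_hierarchy hsymm hsepmain huniv hc hnonempty hH
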